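/- Let G be a compact topological group and φ a continuous automorphism of G such that G equals the closure of the subgroup generated by all commutators [g,φ] = g⁻¹·φ(g) for g ∈ G. If N is a normal subgroup of G contained in the fixed-point subgroup of φ, then N is contained in the center of G. -/

import Mathlib

/-- The commutator `[a,b] = a⁻¹b⁻¹ab`. -/
def cmt {G : Type*} [Group G] (a b : G) : G := a⁻¹ * b⁻¹ * a * b

private lemma conj_eq_commute {G : Type*} [Group G] {a x y : G}
    (h : x⁻¹ * a * x = y⁻¹ * a * y) : Commute a (x * y⁻¹) := by
  have h2 : a * x = x * (y⁻¹ * a * y) := by rw [← h]; group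
  show a * (x * y⁻¹) = (x * y⁻¹) * a
  calc a * (x * y⁻¹) = (a * x) * y⁻¹ := by group
    _ = (x * (y⁻¹ * a * y)) * y⁻¹ := by rw [h2]
    _ = (x * y⁻¹) * a := by group

/-- For a continuous automorphism `φ` of a compact group `G` with
`G = [G,φ]` (topologically generated by the commutators `g⁻¹·φ(g)`),
any normal subgroup contained in the fixed points of `φ` is central. -/
theorem stmt0 {G : Type*} [Group G] [TopologicalSpace G] [IsTopologicalGroup G]
    [CompactSpace G] [T2Space G]
    (φ : G ≃* G) (hφ : Continuous φ)
    (hgen : (Subgroup.closure {x : G | ∃ g : G, x = g⁻¹ * φ g}).topologicalClosure = ⊤)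
    (N : Subgroup G) (hN : N.Normal)
    (hfix : ∀ g ∈ N, φ g = g) :
    N ≤ Subgroup.center G := by
  intro n hn
  rw [Subgroup.mem_center_iff]
  have hclosed : IsClosed (Subgroup.centralizer {n} : Set G) := by
    have hcarrier : (Subgroup.centralizer {n} : Set G) = {g : G | n * g = g * n} := by
      ext g; simp [Subgroup.mem_centralizer_iff]
    rw [hcarrier]
    exact isClosed_eq (continuous_const.mul continuous_id) (continuous_id.mul continuous_const)
  have hcomm : ∀ g : G, Commute n (φ g * g⁻¹) := by
    intro g
    have hconj : φ (g⁻¹ * n * g) = g⁻¹ * n * g := hfix _ (by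
      have := hN.conj_mem n hn g⁻¹
      simpa [mul_assoc] using this)
    have h' : (φ g)⁻¹ * n * φ g = g⁻¹ * n * g := by
      have : φ g⁻¹ * φ n * φ g = g⁻¹ * n * g := by
        rw [← map_mul, ← map_mul]; exact hconj
      simpa [map_inv, hfix n hn] using this
    exact conj_eq_commute h'
  have hsub : Subgroup.closure {x : G | ∃ g : G, x = g⁻¹ * φ g} ≤ Subgroup.centralizer {n} := by
    rw [Subgroup.closure_le]
    rintro x ⟨g, rfl⟩
    rw [SetLike.mem_coe, Subgroup.mem_centralizer_iff]
    intro m hm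
    rw [Set.mem_singleton_iff] at hm
    subst hm
    have := (hcomm g⁻¹).inv_right
    exact (by simpa [map_inv, mul_inv_rev] using this : Commute m (g⁻¹ * φ g))
  have htop : Subgroup.centralizer {n} = ⊤ := by
    rw [← top_le_iff, ← hgen]
    exact Subgroup.topologicalClosure_minimal _ hsub hclosed
  intro g
  have hg : g ∈ Subgroup.centralizer {n} := htop ▸ Subgroup.mem_top g
  exact (Subgroup.mem_centralizer_iff.mp hg n rfl).symm
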